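/- Let ν > 0 and 0 < τ ≤ 1. Then the ℓ^{4/3} norm over k ∈ ℤ of the sequence k ↦ τ k^2 e^{-τ(ν k^4 - k^2)} is bounded by C τ^{5/16}, where C depends only on ν. -/

import Mathlib

set_option maxHeartbeats 1000000
open Real


lemma aux_tail_inv_sq (K : ℕ) (hK : 1 ≤ K) :
    ∑' n : ℕ, (1:ℝ) / ((n:ℝ) + 1 + K)^2 ≤ 1 / (K:ℝ) := by
  have hK0 : (0:ℝ) < K := by exact_mod_cast hK
  refine Real.tsum_le_of_sum_range_le (fun n => by positivity) ?_
  intro m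
  have h : ∀ m : ℕ, ∑ i ∈ Finset.range m, (1:ℝ)/((i:ℝ)+1+K)^2 ≤ 1/K - 1/((m:ℝ)+K) := by
    intro m
    induction m with
    | zero => simp
    | succ m ih =>
      rw [Finset.sum_range_succ]
      have h1 : (0:ℝ) < (m:ℝ) + K := by positivity
      have h2 : (0:ℝ) < (m:ℝ) + 1 + K := by positivity
      have key : (1:ℝ)/((m:ℝ)+1+K)^2 ≤ 1/((m:ℝ)+K) - 1/((m:ℝ)+1+K) := by
        rw [div_sub_div _ _ (ne_of_gt h1) (ne_of_gt h2), div_le_div_iff₀ (by positivity) (by positivity)]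
        nlinarith
      push_cast
      push_cast at ih
      linarith
  have h3 : (0:ℝ) ≤ 1/((m:ℝ)+K) := by positivity
  linarith [h m]

lemma aux_exp_neg_le (u : ℝ) (hu : 0 < u) : Real.exp (-u) ≤ 1 / u := by
  rw [Real.exp_neg, one_div]
  have h : u ≤ Real.exp u := by linarith [Real.add_one_le_exp u]
  exact inv_anti₀ hu h

lemma aux_exp_bound (ν τ x : ℝ) (hν : 0 < ν) (hτ : 0 < τ) (hτ1 : τ ≤ 1) :
    Real.exp (-τ * (ν * x^4 - x^2)) ≤ Real.exp (1/(2*ν)) * Real.exp (-(ν/2*τ) * x^4) := by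
  rw [← Real.exp_add, Real.exp_le_exp]
  have hgm : x^2 - ν/2 * x^4 ≤ 1/(2*ν) := by
    rw [le_div_iff₀ (by positivity)]
    nlinarith [sq_nonneg (ν * x^2 - 1)]
  have key : τ * (x^2 - ν/2 * x^4) ≤ 1/(2*ν) := by
    rcases le_or_gt (x^2 - ν/2*x^4) 0 with h | h
    · have h1 : τ * (x^2 - ν/2*x^4) ≤ 0 := mul_nonpos_of_nonneg_of_nonpos hτ.le h
      have h2 : (0:ℝ) ≤ 1/(2*ν) := by positivity
      linarith
    · nlinarith
  nlinarith [key]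

lemma aux_base_head (ν τ x : ℝ) (hν : 0 < ν) (hτ : 0 < τ) (hτ1 : τ ≤ 1) :
    τ * x^2 * Real.exp (-τ * (ν * x^4 - x^2)) ≤ Real.exp (1/(2*ν)) * (τ * x^2) := by
  have h1 := aux_exp_bound ν τ x hν hτ hτ1
  have hx4 : (0:ℝ) ≤ x^4 := by positivity
  have h2 : Real.exp (-(ν/2*τ)*x^4) ≤ 1 := by
    rw [Real.exp_le_one_iff]
    have h : (0:ℝ) ≤ ν/2*τ*x^4 := by positivity
    nlinarith
  have hA0 : (0:ℝ) < Real.exp (1/(2*ν)) := Real.exp_pos _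
  calc τ*x^2*Real.exp (-τ * (ν * x^4 - x^2))
      ≤ τ*x^2*(Real.exp (1/(2*ν)) * Real.exp (-(ν/2*τ)*x^4)) :=
        mul_le_mul_of_nonneg_left h1 (by positivity)
    _ = Real.exp (1/(2*ν))*(τ*x^2)*Real.exp (-(ν/2*τ)*x^4) := by ring
    _ ≤ Real.exp (1/(2*ν))*(τ*x^2)*1 := mul_le_mul_of_nonneg_left h2 (by positivity)
    _ = Real.exp (1/(2*ν))*(τ*x^2) := by ring

lemma aux_base_tail (ν τ x : ℝ) (hν : 0 < ν) (hτ : 0 < τ) (hτ1 : τ ≤ 1) (hx : x ≠ 0) :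
    τ * x^2 * Real.exp (-τ * (ν * x^4 - x^2)) ≤ Real.exp (1/(2*ν)) / (ν/2 * x^2) := by
  have h1 := aux_exp_bound ν τ x hν hτ hτ1
  have hx2 : (0:ℝ) < x^2 := by positivity
  have hx4 : (0:ℝ) < x^4 := by positivity
  have hu : (0:ℝ) < ν/2*τ*x^4 := by positivity
  have h2 : Real.exp (-(ν/2*τ)*x^4) ≤ 1/(ν/2*τ*x^4) := by
    have h := aux_exp_neg_le (ν/2*τ*x^4) hu
    have e : -(ν/2*τ*x^4) = -(ν/2*τ)*x^4 := by ring
    rwa [e] at h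
  have hA0 : (0:ℝ) < Real.exp (1/(2*ν)) := Real.exp_pos _
  calc τ*x^2*Real.exp (-τ * (ν * x^4 - x^2))
      ≤ τ*x^2*(Real.exp (1/(2*ν)) * Real.exp (-(ν/2*τ)*x^4)) :=
        mul_le_mul_of_nonneg_left h1 (by positivity)
    _ ≤ τ*x^2*(Real.exp (1/(2*ν)) * (1/(ν/2*τ*x^4))) := by
        refine mul_le_mul_of_nonneg_left (mul_le_mul_of_nonneg_left h2 hA0.le) (by positivity)
    _ = Real.exp (1/(2*ν)) / (ν/2 * x^2) := by
        field_simp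





noncomputable def mg (ν τ x : ℝ) : ℝ :=
  (τ * x ^ 2 * Real.exp (-τ * (ν * x ^ 4 - x ^ 2))) ^ ((4:ℝ)/3)

lemma mg_nonneg (ν τ x : ℝ) (hτ : 0 ≤ τ) : 0 ≤ mg ν τ x :=
  Real.rpow_nonneg (by positivity) _

lemma mg_even (ν τ x : ℝ) : mg ν τ (-x) = mg ν τ x := by
  unfold mg
  ring_nf

lemma mg_zero (ν τ : ℝ) : mg ν τ 0 = 0 := by
  unfold mg
  norm_num

lemma mg_head (ν τ x : ℝ) (hν : 0 < ν) (hτ : 0 < τ) (hτ1 : τ ≤ 1) :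
    mg ν τ x ≤ (Real.exp (1/(2*ν)) * (τ * x^2)) ^ ((4:ℝ)/3) :=
  Real.rpow_le_rpow (by positivity) (aux_base_head ν τ x hν hτ hτ1) (by norm_num)

lemma mg_tail (ν τ x : ℝ) (hν : 0 < ν) (hτ : 0 < τ) (hτ1 : τ ≤ 1) (hx : x ≠ 0) :
    mg ν τ x ≤ (Real.exp (1/(2*ν)) / (ν/2 * x^2)) ^ ((4:ℝ)/3) :=
  Real.rpow_le_rpow (by positivity) (aux_base_tail ν τ x hν hτ hτ1 hx) (by norm_num)

-- refined tail bound with the K^{-2/3} factor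
lemma mg_tail2 (ν τ x y : ℝ) (hν : 0 < ν) (hτ : 0 < τ) (hτ1 : τ ≤ 1)
    (hy : 1 ≤ y) (hx : y ≤ x) :
    mg ν τ x ≤ (Real.exp (1/(2*ν)) / (ν/2))^((4:ℝ)/3) * (y^(-((2:ℝ)/3)) * (1/x^2)) := by
  have hy0 : (0:ℝ) < y := by linarith
  have hx0 : (0:ℝ) < x := by linarith
  set A : ℝ := Real.exp (1/(2*ν)) with hA
  have hA0 : 0 < A := Real.exp_pos _
  have hc0 : (0:ℝ) < ν/2 := by linarith
  have e1 : A / (ν/2 * x^2) = (A/(ν/2)) * (x^2)⁻¹ := by field_simp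
  have h1 : mg ν τ x ≤ ((A/(ν/2)) * (x^2)⁻¹) ^ ((4:ℝ)/3) := by
    rw [← e1]; exact mg_tail ν τ x hν hτ hτ1 (ne_of_gt hx0)
  rw [Real.mul_rpow (by positivity) (by positivity)] at h1
  refine h1.trans (mul_le_mul_of_nonneg_left ?_ (by positivity))
  -- ((x^2)⁻¹)^(4/3) = x^(-8/3) ≤ y^(-2/3) * x^(-2)
  have e2 : ((x^2)⁻¹ : ℝ) ^ ((4:ℝ)/3) = x ^ (-((8:ℝ)/3)) := by
    rw [← Real.rpow_natCast x 2, ← Real.rpow_neg hx0.le, ← Real.rpow_mul hx0.le]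
    norm_num
  have e3 : x ^ (-((8:ℝ)/3)) = x ^ (-((2:ℝ)/3)) * x ^ (-(2:ℝ)) := by
    rw [← Real.rpow_add hx0]
    norm_num
  have e4 : x ^ (-(2:ℝ)) = 1/x^2 := by
    rw [Real.rpow_neg hx0.le, one_div]
    norm_num [Real.rpow_natCast]
  have h2 : x ^ (-((2:ℝ)/3)) ≤ y ^ (-((2:ℝ)/3)) :=
    Real.rpow_le_rpow_of_nonpos hy0 hx (by norm_num)
  rw [e2, e3, e4]
  exact mul_le_mul_of_nonneg_right h2 (by positivity)

lemma mg_crude (ν τ x : ℝ) (hν : 0 < ν) (hτ : 0 < τ) (hτ1 : τ ≤ 1) (hx : 1 ≤ x) :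
    mg ν τ x ≤ (Real.exp (1/(2*ν)) / (ν/2))^((4:ℝ)/3) * (1/x^2) := by
  have h := mg_tail2 ν τ x 1 hν hτ hτ1 le_rfl hx
  rwa [Real.one_rpow, one_mul] at h

lemma mg_summable_shift (ν τ : ℝ) (hν : 0 < ν) (hτ : 0 < τ) (hτ1 : τ ≤ 1) :
    Summable (fun n : ℕ => mg ν τ ((n:ℝ)+1)) := by
  have hsumbase0 : Summable (fun n : ℕ => (1:ℝ)/(n:ℝ)^2) :=
    summable_one_div_nat_pow.mpr (by norm_num)
  have h : Summable (fun n : ℕ => (1:ℝ)/((n+1:ℕ):ℝ)^2) :=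
    (summable_nat_add_iff 1).mpr hsumbase0
  have h2 : Summable (fun n : ℕ => (1:ℝ)/((n:ℝ)+1)^2) := by
    refine h.congr fun n => ?_
    push_cast
    ring_nf
  have hmaj : Summable (fun n : ℕ =>
      (Real.exp (1/(2*ν)) / (ν/2))^((4:ℝ)/3) * ((1:ℝ)/((n:ℝ)+1)^2)) := h2.mul_left _
  exact Summable.of_nonneg_of_le (fun n => mg_nonneg ν τ _ hτ.le)
    (fun n => mg_crude ν τ ((n:ℝ)+1) hν hτ hτ1 (by linarith [Nat.cast_nonneg (α := ℝ) n])) hmaj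

lemma mg_summable_nat (ν τ : ℝ) (hν : 0 < ν) (hτ : 0 < τ) (hτ1 : τ ≤ 1) :
    Summable (fun n : ℕ => mg ν τ (n:ℝ)) := by
  refine (summable_nat_add_iff 1).mp (((mg_summable_shift ν τ hν hτ hτ1).congr fun n => ?_))
  push_cast
  ring_nf

lemma mg_tsum_int (ν τ : ℝ) (hν : 0 < ν) (hτ : 0 < τ) (hτ1 : τ ≤ 1) :
    ∑' k : ℤ, mg ν τ ((k:ℤ):ℝ) = 2 * ∑' n : ℕ, mg ν τ ((n:ℝ)+1) := by
  have hsumZ1 : Summable (fun n : ℕ => mg ν τ (((n:ℤ)):ℝ)) := by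
    refine (mg_summable_nat ν τ hν hτ hτ1).congr fun n => ?_
    norm_num
  have hsumZ2 : Summable (fun n : ℕ => mg ν τ (((-((n:ℤ)+1)):ℤ):ℝ)) := by
    refine (mg_summable_shift ν τ hν hτ hτ1).congr fun n => ?_
    push_cast
    rw [← mg_even ν τ ((n:ℝ)+1)]
  rw [tsum_of_nat_of_neg_add_one (f := fun k : ℤ => mg ν τ ((k:ℤ):ℝ)) hsumZ1 hsumZ2]
  have e1 : (∑' n : ℕ, mg ν τ (((n:ℤ)):ℝ)) = ∑' n : ℕ, mg ν τ (n:ℝ) :=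
    tsum_congr fun n => by norm_num
  have e2 : (∑' n : ℕ, mg ν τ (((-((n:ℤ)+1)):ℤ):ℝ)) = ∑' n : ℕ, mg ν τ ((n:ℝ)+1) :=
    tsum_congr fun n => by push_cast; rw [← mg_even ν τ ((n:ℝ)+1)]
  have e3 : (∑' n : ℕ, mg ν τ (n:ℝ)) = mg ν τ 0 + ∑' n : ℕ, mg ν τ ((n:ℝ)+1) := by
    rw [(mg_summable_nat ν τ hν hτ hτ1).tsum_eq_zero_add]
    congr 1
    · norm_num
    · exact tsum_congr fun n => by push_cast; ring_nf
  rw [e1, e2, e3, mg_zero]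
  ring


noncomputable def mCC (A c : ℝ) : ℝ :=
  A^((4:ℝ)/3)*(1+c^((1:ℝ)/4))^((11:ℝ)/3)*c^(-((11:ℝ)/12)) + (A/c)^((4:ℝ)/3)*c^((5:ℝ)/12)

lemma mg_sum_bound (ν τ : ℝ) (hν : 0 < ν) (hτ0 : 0 < τ) (hτ1 : τ ≤ 1) :
    ∑' n : ℕ, mg ν τ ((n:ℝ)+1) ≤ mCC (Real.exp (1/(2*ν))) (ν/2) * τ ^ ((5:ℝ)/12) := by
  have hc0 : (0:ℝ) < ν/2 := by linarith
  set c : ℝ := ν/2 with hc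
  set A : ℝ := Real.exp (1/(2*ν)) with hA
  have hA0 : 0 < A := Real.exp_pos _
  set t : ℝ := c * τ with ht
  have ht0 : 0 < t := mul_pos hc0 hτ0
  set r : ℝ := t ^ (-((1:ℝ)/4)) with hr
  have hr0 : 0 < r := Real.rpow_pos_of_pos ht0 _
  set K : ℕ := ⌈r⌉₊ with hK
  have hK1 : 1 ≤ K := Nat.one_le_ceil_iff.mpr hr0
  set y : ℝ := (K:ℝ) with hy
  have hy1 : (1:ℝ) ≤ y := by rw [hy]; exact_mod_cast hK1
  have hy0 : (0:ℝ) < y := by linarith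
  have hKr : r ≤ y := Nat.le_ceil r
  -- upper bound for y
  have hcr1 : (1:ℝ) ≤ c^((1:ℝ)/4) * r := by
    have e1 : c^((1:ℝ)/4) * r = (c/t)^((1:ℝ)/4) := by
      rw [hr, Real.rpow_neg ht0.le, Real.div_rpow hc0.le ht0.le]
      rfl
    rw [e1]
    have e2 : c/t = τ⁻¹ := by
      rw [ht]
      field_simp
    rw [e2]
    exact Real.one_le_rpow (by rw [one_le_inv_iff₀]; exact ⟨hτ0, hτ1⟩) (by norm_num)
  have hyub : y ≤ (1 + c^((1:ℝ)/4)) * r := by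
    have h1 : y < r + 1 := Nat.ceil_lt_add_one hr0.le
    nlinarith
  -- split the sum
  rw [← (mg_summable_shift ν τ hν hτ0 hτ1).sum_add_tsum_nat_add K]
  have hB0 : (0:ℝ) < 1 + c^((1:ℝ)/4) := by positivity
  -- head bound
  have hhead : ∑ n ∈ Finset.range K, mg ν τ ((n:ℝ)+1)
      ≤ A^((4:ℝ)/3)*(1+c^((1:ℝ)/4))^((11:ℝ)/3)*c^(-((11:ℝ)/12)) * τ^((5:ℝ)/12) := by
    have h1 : ∑ n ∈ Finset.range K, mg ν τ ((n:ℝ)+1) ≤ K • ((A * (τ * y^2)) ^ ((4:ℝ)/3)) := by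
      refine Finset.sum_le_card_nsmul _ _ _ (fun n hn => ?_) |>.trans (by rw [Finset.card_range])
      have hn' : (n:ℝ)+1 ≤ y := by
        have h2 : n + 1 ≤ K := Finset.mem_range.mp hn
        rw [hy]; exact_mod_cast h2
      refine (mg_head ν τ ((n:ℝ)+1) hν hτ0 hτ1).trans ?_
      refine Real.rpow_le_rpow (by positivity) ?_ (by norm_num)
      have h2 : ((n:ℝ)+1)^2 ≤ y^2 := by nlinarith [Nat.cast_nonneg (α := ℝ) n]
      exact mul_le_mul_of_nonneg_left (mul_le_mul_of_nonneg_left h2 hτ0.le) hA0.le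
    rw [nsmul_eq_mul, ← hy] at h1
    refine h1.trans ?_
    have eH : (A * (τ * y^2)) ^ ((4:ℝ)/3) = A^((4:ℝ)/3) * τ^((4:ℝ)/3) * y^((8:ℝ)/3) := by
      rw [show A*(τ*y^2) = A*τ*y^2 from by ring,
        Real.mul_rpow (by positivity) (by positivity),
        Real.mul_rpow hA0.le hτ0.le,
        ← Real.rpow_natCast y 2, ← Real.rpow_mul hy0.le]
      norm_num
    rw [eH]
    have e5 : y * (A^((4:ℝ)/3) * τ^((4:ℝ)/3) * y^((8:ℝ)/3))
        = A^((4:ℝ)/3) * τ^((4:ℝ)/3) * y^((11:ℝ)/3) := by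
      rw [show (11:ℝ)/3 = 1 + 8/3 from by norm_num, Real.rpow_add hy0, Real.rpow_one]
      ring
    rw [e5]
    have h6 : y^((11:ℝ)/3) ≤ (1+c^((1:ℝ)/4))^((11:ℝ)/3) * t^(-((11:ℝ)/12)) := by
      calc y^((11:ℝ)/3) ≤ ((1+c^((1:ℝ)/4))*r)^((11:ℝ)/3) :=
            Real.rpow_le_rpow hy0.le hyub (by norm_num)
        _ = (1+c^((1:ℝ)/4))^((11:ℝ)/3) * r^((11:ℝ)/3) := Real.mul_rpow hB0.le hr0.le
        _ = (1+c^((1:ℝ)/4))^((11:ℝ)/3) * t^(-((11:ℝ)/12)) := by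
            rw [hr, ← Real.rpow_mul ht0.le]
            norm_num
    have eτ : τ^((4:ℝ)/3) * τ^(-((11:ℝ)/12)) = τ^((5:ℝ)/12) := by
      rw [← Real.rpow_add hτ0]; norm_num
    have etc1 : t^(-((11:ℝ)/12)) = c^(-((11:ℝ)/12)) * τ^(-((11:ℝ)/12)) := by
      rw [ht, Real.mul_rpow hc0.le hτ0.le]
    calc A^((4:ℝ)/3) * τ^((4:ℝ)/3) * y^((11:ℝ)/3)
        ≤ A^((4:ℝ)/3) * τ^((4:ℝ)/3) * ((1+c^((1:ℝ)/4))^((11:ℝ)/3) * t^(-((11:ℝ)/12))) := by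
          refine mul_le_mul_of_nonneg_left h6 ?_
          exact mul_nonneg (Real.rpow_nonneg hA0.le _) (Real.rpow_nonneg hτ0.le _)
      _ = A^((4:ℝ)/3)*(1+c^((1:ℝ)/4))^((11:ℝ)/3)*c^(-((11:ℝ)/12)) * τ^((5:ℝ)/12) := by
          rw [etc1, ← eτ]; ring
  -- tail bound
  have htail : ∑' n : ℕ, mg ν τ (((n+K:ℕ):ℝ)+1)
      ≤ (A/c)^((4:ℝ)/3)*c^((5:ℝ)/12) * τ^((5:ℝ)/12) := by
    have hsb : Summable (fun n : ℕ => (1:ℝ)/((n:ℝ)+1+K)^2) := by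
      have h0 : Summable (fun n : ℕ => (1:ℝ)/(n:ℝ)^2) :=
        summable_one_div_nat_pow.mpr (by norm_num)
      refine ((summable_nat_add_iff (K+1)).mpr h0).congr fun n => ?_
      push_cast
      ring_nf
    have hptw : ∀ n : ℕ, mg ν τ (((n+K:ℕ):ℝ)+1)
        ≤ (A/c)^((4:ℝ)/3) * (y^(-((2:ℝ)/3)) * ((1:ℝ)/((n:ℝ)+1+K)^2)) := by
      intro n
      have e1 : ((n+K:ℕ):ℝ)+1 = (n:ℝ)+1+K := by push_cast; ring
      rw [e1]
      have hyx : y ≤ (n:ℝ)+1+K := by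
        rw [hy]; linarith [Nat.cast_nonneg (α := ℝ) n]
      have := mg_tail2 ν τ ((n:ℝ)+1+K) y hν hτ0 hτ1 hy1 hyx
      rw [← hA, ← hc] at this
      exact this
    have hsum_rhs : Summable (fun n : ℕ =>
        (A/c)^((4:ℝ)/3) * (y^(-((2:ℝ)/3)) * ((1:ℝ)/((n:ℝ)+1+K)^2))) :=
      (hsb.mul_left _).mul_left _
    have h1 : ∑' n : ℕ, mg ν τ (((n+K:ℕ):ℝ)+1)
        ≤ ∑' n : ℕ, (A/c)^((4:ℝ)/3) * (y^(-((2:ℝ)/3)) * ((1:ℝ)/((n:ℝ)+1+K)^2)) := by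
      refine Summable.tsum_le_tsum hptw ?_ hsum_rhs
      exact (summable_nat_add_iff K).mpr (mg_summable_shift ν τ hν hτ0 hτ1) |>.congr
        (fun n => by push_cast; ring_nf)
    refine h1.trans ?_
    rw [tsum_mul_left, tsum_mul_left]
    have h2 : ∑' n : ℕ, (1:ℝ)/((n:ℝ)+1+K)^2 ≤ 1/y := by
      rw [hy]; exact aux_tail_inv_sq K hK1
    have hAc0 : (0:ℝ) ≤ (A/c)^((4:ℝ)/3) := Real.rpow_nonneg (by positivity) _
    have hym : (0:ℝ) ≤ y^(-((2:ℝ)/3)) := Real.rpow_nonneg hy0.le _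
    have h3 : y^(-((2:ℝ)/3)) * (∑' n : ℕ, (1:ℝ)/((n:ℝ)+1+K)^2) ≤ y^(-((2:ℝ)/3)) * (1/y) :=
      mul_le_mul_of_nonneg_left h2 hym
    refine (mul_le_mul_of_nonneg_left h3 hAc0).trans ?_
    -- y^{-2/3} * (1/y) ≤ t^{1/6} * t^{1/4} = t^{5/12}
    have h7 : y^(-((2:ℝ)/3)) ≤ t^((1:ℝ)/6) := by
      have := Real.rpow_le_rpow_of_nonpos hr0 hKr (by norm_num : -((2:ℝ)/3) ≤ 0)
      refine this.trans_eq ?_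
      rw [hr, ← Real.rpow_mul ht0.le]
      norm_num
    have h8 : 1/y ≤ t^((1:ℝ)/4) := by
      have h9 : 1/y ≤ 1/r := one_div_le_one_div_of_le hr0 hKr
      refine h9.trans_eq ?_
      rw [hr, one_div, Real.rpow_neg ht0.le, inv_inv]
    have h10 : y^(-((2:ℝ)/3)) * (1/y) ≤ t^((1:ℝ)/6) * t^((1:ℝ)/4) :=
      mul_le_mul h7 h8 (by positivity) (Real.rpow_nonneg ht0.le _)
    have h11 : t^((1:ℝ)/6) * t^((1:ℝ)/4) = c^((5:ℝ)/12) * τ^((5:ℝ)/12) := by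
      rw [← Real.rpow_add ht0, show (1:ℝ)/6 + 1/4 = 5/12 from by norm_num, ht,
        Real.mul_rpow hc0.le hτ0.le]
    calc (A/c)^((4:ℝ)/3) * (y^(-((2:ℝ)/3)) * (1/y))
        ≤ (A/c)^((4:ℝ)/3) * (t^((1:ℝ)/6) * t^((1:ℝ)/4)) :=
          mul_le_mul_of_nonneg_left h10 hAc0
      _ = (A/c)^((4:ℝ)/3)*c^((5:ℝ)/12) * τ^((5:ℝ)/12) := by rw [h11]; ring
  have hfin : ∑' n : ℕ, mg ν τ (((n+K:ℕ):ℝ)+1) = ∑' n : ℕ, mg ν τ (((n+K:ℕ):ℝ)+1) := rfl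
  have : mCC A c = A^((4:ℝ)/3)*(1+c^((1:ℝ)/4))^((11:ℝ)/3)*c^(-((11:ℝ)/12))
      + (A/c)^((4:ℝ)/3)*c^((5:ℝ)/12) := rfl
  rw [this]
  have hcongr : ∑' n : ℕ, mg ν τ ((((n+K:ℕ)):ℝ)+1) = ∑' n : ℕ, mg ν τ (((n:ℕ):ℝ)+1+K) :=
    tsum_congr fun n => by push_cast; ring_nf
  nlinarith [hhead, htail, hcongr]


lemma mCC_pos (A c : ℝ) (hA : 0 < A) (hc : 0 < c) : 0 < mCC A c := by
  unfold mCC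
  positivity

/-- The `ℓ^{4/3}` norm over `k ∈ ℤ` of the sequence `k ↦ τ k² e^{-τ(ν k⁴ - k²)}`
is bounded by `C(ν) τ^{5/16}` for `0 < τ ≤ 1`. -/
theorem l43_multiplier_bound (ν : ℝ) (hν : 0 < ν) :
    ∃ C : ℝ, 0 < C ∧ ∀ τ : ℝ, 0 < τ → τ ≤ 1 →
      (∑' k : ℤ, (τ * (k : ℝ) ^ 2 *
          Real.exp (-τ * (ν * (k : ℝ) ^ 4 - (k : ℝ) ^ 2))) ^ ((4 : ℝ) / 3)) ^ ((3 : ℝ) / 4)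
        ≤ C * τ ^ ((5 : ℝ) / 16) := by
  have hc0 : (0:ℝ) < ν/2 := by linarith
  have hA0 : (0:ℝ) < Real.exp (1/(2*ν)) := Real.exp_pos _
  have hD0 : (0:ℝ) < 2 * mCC (Real.exp (1/(2*ν))) (ν/2) := by
    have := mCC_pos (Real.exp (1/(2*ν))) (ν/2) hA0 hc0
    linarith
  refine ⟨(2 * mCC (Real.exp (1/(2*ν))) (ν/2)) ^ ((3:ℝ)/4),
    Real.rpow_pos_of_pos hD0 _, ?_⟩
  intro τ hτ0 hτ1
  have hexpr : (∑' k : ℤ, (τ * (k : ℝ) ^ 2 *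
      Real.exp (-τ * (ν * (k : ℝ) ^ 4 - (k : ℝ) ^ 2))) ^ ((4 : ℝ) / 3))
      = ∑' k : ℤ, mg ν τ ((k:ℤ):ℝ) := tsum_congr fun k => rfl
  rw [hexpr, mg_tsum_int ν τ hν hτ0 hτ1]
  have hmain : 2 * ∑' n : ℕ, mg ν τ ((n:ℝ)+1)
      ≤ 2 * mCC (Real.exp (1/(2*ν))) (ν/2) * τ ^ ((5:ℝ)/12) := by
    have := mg_sum_bound ν τ hν hτ0 hτ1
    linarith
  have h0S : 0 ≤ 2 * ∑' n : ℕ, mg ν τ ((n:ℝ)+1) := by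
    have : 0 ≤ ∑' n : ℕ, mg ν τ ((n:ℝ)+1) := tsum_nonneg (fun n : ℕ => mg_nonneg ν τ ((n:ℝ)+1) hτ0.le)
    linarith
  calc (2 * ∑' n : ℕ, mg ν τ ((n:ℝ)+1)) ^ ((3:ℝ)/4)
      ≤ (2 * mCC (Real.exp (1/(2*ν))) (ν/2) * τ ^ ((5:ℝ)/12)) ^ ((3:ℝ)/4) :=
        Real.rpow_le_rpow h0S hmain (by norm_num)
    _ = (2 * mCC (Real.exp (1/(2*ν))) (ν/2)) ^ ((3:ℝ)/4) * τ ^ ((5:ℝ)/16) := by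
        rw [Real.mul_rpow hD0.le (Real.rpow_nonneg hτ0.le _), ← Real.rpow_mul hτ0.le]
        norm_num
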